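/- In the dependent CRM, conditional on R and N_t the individual severities Y_{t,j} have mean λ₂R₂e^{β₀N_t}; with N_t | R ~ Poisson(λ₁R₁), E[R₂] = 1, Var[R₂] = b₂, R₂ ⟂ (R₁, N_t). Then for claims in the same period, Cov[Y_{t,j₁}, Y_{t,j₂}] = λ₂²[(1 + b₂) M(ζ₂) − (M(ζ₁))²], where ζ₁ = λ₁(e^{β₀} − 1), ζ₂ = λ₁(e^{2β₀} − 1), and M is the mgf of R₁. -/

import Mathlib

open MeasureTheory Real ProbabilityTheory

lemma exp_poisson_integral
    {Ω : Type*} [MeasurableSpace Ω] (μ : Measure Ω) [IsProbabilityMeasure μ]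
    (N : Ω → ℕ) (R₁ : Ω → ℝ) (l₁ c : ℝ)
    (hNmeas : Measurable N) (hR₁meas : Measurable R₁)
    (hR₁pos : ∀ᵐ ω ∂μ, 0 ≤ l₁ * R₁ ω)
    (hPk : ∀ k : ℕ, ∫ ω, (if N ω = k then (1:ℝ) else 0) ∂μ
        = ∫ ω, Real.exp (-(l₁ * R₁ ω)) * (l₁ * R₁ ω) ^ k / (Nat.factorial k) ∂μ)
    (hPkint : ∀ k : ℕ,
      Integrable (fun ω => Real.exp (-(l₁ * R₁ ω)) * (l₁ * R₁ ω) ^ k / (Nat.factorial k)) μ)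
    (hMc : Integrable (fun ω => Real.exp (l₁ * (Real.exp c - 1) * R₁ ω)) μ) :
    Integrable (fun ω => Real.exp (c * N ω)) μ ∧
      ∫ ω, Real.exp (c * N ω) ∂μ = ∫ ω, Real.exp (l₁ * (Real.exp c - 1) * R₁ ω) ∂μ := by
  have hxmeas : Measurable fun ω => l₁ * R₁ ω := measurable_const.mul hR₁meas
  have pmfmeas : ∀ k : ℕ,
      Measurable fun ω => Real.exp (-(l₁ * R₁ ω)) * (l₁ * R₁ ω) ^ k / (Nat.factorial k) :=
    fun k => (hxmeas.neg.exp.mul (hxmeas.pow_const k)).div_const _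
  have hNk : ∀ k : ℕ, MeasurableSet {ω | N ω = k} := fun k =>
    hNmeas (measurableSet_singleton k)
  have hexpNmeas : Measurable fun ω => Real.exp (c * N ω) := by
    exact Real.measurable_exp.comp (measurable_const.mul (measurable_from_top.comp hNmeas))
  -- the measure of {N = k}
  have hB : ∀ k : ℕ, μ {ω | N ω = k}
      = ENNReal.ofReal (∫ ω, Real.exp (-(l₁ * R₁ ω)) * (l₁ * R₁ ω) ^ k / (Nat.factorial k) ∂μ) := by
    intro k
    have h1 : ∫ ω, (if N ω = k then (1:ℝ) else 0) ∂μ = (μ {ω | N ω = k}).toReal := by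
      rw [← measureReal_def, ← integral_indicator_one (hNk k)]
      congr 1
      ext ω
      simp [Set.indicator_apply]
    rw [← hPk k, h1, ENNReal.ofReal_toReal (measure_ne_top μ _)]
  -- main lintegral identity
  have L : ∫⁻ ω, ENNReal.ofReal (Real.exp (c * N ω)) ∂μ
      = ∫⁻ ω, ENNReal.ofReal (Real.exp (l₁ * (Real.exp c - 1) * R₁ ω)) ∂μ := by
    have hL1 : ∫⁻ ω, ENNReal.ofReal (Real.exp (c * N ω)) ∂μ
        = ∑' k : ℕ, ENNReal.ofReal (Real.exp (c * k)) * μ {ω | N ω = k} := by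
      have hpt : ∀ ω, ENNReal.ofReal (Real.exp (c * N ω))
          = ∑' k : ℕ, Set.indicator {ω' | N ω' = k}
              (fun _ => ENNReal.ofReal (Real.exp (c * k))) ω := by
        intro ω
        rw [tsum_eq_single (N ω)]
        · simp [Set.indicator_apply]
        · intro k hk
          simp only [Set.indicator_apply, Set.mem_setOf_eq]
          rw [if_neg]
          intro h
          exact hk h.symm
      simp_rw [hpt]
      rw [lintegral_tsum fun k =>
        ((measurable_const.indicator (hNk k)).aemeasurable)]
      congr 1
      ext k
      rw [lintegral_indicator_const (hNk k)]
    have hC : ∀ k : ℕ, ENNReal.ofReal (Real.exp (c * k)) * μ {ω | N ω = k}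
        = ∫⁻ ω, ENNReal.ofReal (Real.exp (c * k) *
            (Real.exp (-(l₁ * R₁ ω)) * (l₁ * R₁ ω) ^ k / (Nat.factorial k))) ∂μ := by
      intro k
      rw [hB k, ← ENNReal.ofReal_mul (Real.exp_nonneg _), ← integral_const_mul,
        ofReal_integral_eq_lintegral_ofReal ((hPkint k).const_mul _)]
      filter_upwards [hR₁pos] with ω hω
      have : (0:ℝ) ≤ (l₁ * R₁ ω) ^ k := pow_nonneg hω k
      positivity
    have hE : ∀ᵐ ω ∂μ, (∑' k : ℕ, ENNReal.ofReal (Real.exp (c * k) *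
          (Real.exp (-(l₁ * R₁ ω)) * (l₁ * R₁ ω) ^ k / (Nat.factorial k))))
        = ENNReal.ofReal (Real.exp (l₁ * (Real.exp c - 1) * R₁ ω)) := by
      filter_upwards [hR₁pos] with ω hω
      set t := l₁ * R₁ ω with ht
      have hterm : ∀ k : ℕ, Real.exp (c * k) * (Real.exp (-t) * t ^ k / (Nat.factorial k))
          = Real.exp (-t) * ((t * Real.exp c) ^ k / (Nat.factorial k)) := by
        intro k
        have h1 : Real.exp (c * k) = (Real.exp c) ^ k := by
          rw [mul_comm, Real.exp_nat_mul]
        rw [h1, mul_pow]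
        ring
      have hsum : Summable fun k : ℕ => Real.exp (c * k) *
          (Real.exp (-t) * t ^ k / (Nat.factorial k)) := by
        simp_rw [hterm]
        exact (Real.summable_pow_div_factorial _).mul_left _
      have hnn : ∀ k : ℕ, 0 ≤ Real.exp (c * k) *
          (Real.exp (-t) * t ^ k / (Nat.factorial k)) := by
        intro k
        have : (0:ℝ) ≤ t ^ k := pow_nonneg hω k
        positivity
      rw [← ENNReal.ofReal_tsum_of_nonneg hnn hsum]
      congr 1
      have hexp : ∀ y : ℝ, ∑' n : ℕ, y ^ n / (Nat.factorial n) = Real.exp y := by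
        intro y
        rw [Real.exp_eq_exp_ℝ, NormedSpace.exp_eq_tsum_div]
      calc ∑' k : ℕ, Real.exp (c * k) * (Real.exp (-t) * t ^ k / (Nat.factorial k))
          = ∑' k : ℕ, Real.exp (-t) * ((t * Real.exp c) ^ k / (Nat.factorial k)) := by
            exact tsum_congr hterm
        _ = Real.exp (-t) * ∑' k : ℕ, (t * Real.exp c) ^ k / (Nat.factorial k) := tsum_mul_left
        _ = Real.exp (-t) * Real.exp (t * Real.exp c) := by rw [hexp]
        _ = Real.exp (l₁ * (Real.exp c - 1) * R₁ ω) := by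
            rw [← Real.exp_add]
            congr 1
            rw [ht]
            ring
    calc ∫⁻ ω, ENNReal.ofReal (Real.exp (c * N ω)) ∂μ
        = ∑' k : ℕ, ENNReal.ofReal (Real.exp (c * k)) * μ {ω | N ω = k} := hL1
      _ = ∑' k : ℕ, ∫⁻ ω, ENNReal.ofReal (Real.exp (c * k) *
            (Real.exp (-(l₁ * R₁ ω)) * (l₁ * R₁ ω) ^ k / (Nat.factorial k))) ∂μ :=
          tsum_congr hC
      _ = ∫⁻ ω, ∑' k : ℕ, ENNReal.ofReal (Real.exp (c * k) *
            (Real.exp (-(l₁ * R₁ ω)) * (l₁ * R₁ ω) ^ k / (Nat.factorial k))) ∂μ := by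
          exact (lintegral_tsum fun k =>
            (((pmfmeas k).const_mul _).ennreal_ofReal).aemeasurable).symm
      _ = ∫⁻ ω, ENNReal.ofReal (Real.exp (l₁ * (Real.exp c - 1) * R₁ ω)) ∂μ :=
          lintegral_congr_ae hE
  have hintN : Integrable (fun ω => Real.exp (c * N ω)) μ := by
    refine ⟨hexpNmeas.aestronglyMeasurable, ?_⟩
    rw [hasFiniteIntegral_iff_ofReal (ae_of_all _ fun ω => (Real.exp_pos _).le), L]
    exact (hasFiniteIntegral_iff_ofReal (ae_of_all _ fun ω => (Real.exp_pos _).le)).1 hMc.2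
  refine ⟨hintN, ?_⟩
  rw [integral_eq_lintegral_of_nonneg_ae (ae_of_all _ fun ω => (Real.exp_pos _).le)
      hintN.1,
    integral_eq_lintegral_of_nonneg_ae (ae_of_all _ fun ω => (Real.exp_pos _).le) hMc.1, L]

/-- In the dependent CRM, individual severities in the same period with common conditional
mean `l₂ R₂ e^{β₀ N}` given `(R, N)`, conditionally independent given `(R, N)`, where
`N | R ~ Poisson(l₁ R₁)`, `E[R₂] = 1`, `Var[R₂] = b₂` and `R₂ ⟂ (R₁, N)`, satisfy
`Cov[Y₁, Y₂] = l₂² [(1 + b₂) M(ζ₂) - (M(ζ₁))²]` with `ζ₁ = l₁(e^{β₀}-1)`,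
`ζ₂ = l₁(e^{2β₀}-1)`, `M` the mgf of `R₁`. -/
theorem crm_covariance_same_period_severities
    {Ω : Type*} [MeasurableSpace Ω] (μ : Measure Ω) [IsProbabilityMeasure μ]
    (N : Ω → ℕ) (Y₁ Y₂ : Ω → ℝ) (R₁ R₂ : Ω → ℝ)
    (l₁ l₂ β₀ b₂ : ℝ) (hl₁ : 0 < l₁) (hl₂ : 0 < l₂) (hb₂ : 0 ≤ b₂)
    (hN : ∀ k : ℕ,
      μ[fun ω => if N ω = k then (1 : ℝ) else 0 |
          MeasurableSpace.comap (fun ω => (R₁ ω, R₂ ω)) inferInstance] =ᵐ[μ]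
        fun ω => Real.exp (-(l₁ * R₁ ω)) * (l₁ * R₁ ω) ^ k / (Nat.factorial k))
    (hY₁ : μ[Y₁ | MeasurableSpace.comap (fun ω => (N ω, R₁ ω, R₂ ω)) inferInstance] =ᵐ[μ]
        fun ω => l₂ * R₂ ω * Real.exp (β₀ * N ω))
    (hY₂ : μ[Y₂ | MeasurableSpace.comap (fun ω => (N ω, R₁ ω, R₂ ω)) inferInstance] =ᵐ[μ]
        fun ω => l₂ * R₂ ω * Real.exp (β₀ * N ω))
    (hCondIndep :
      μ[fun ω => Y₁ ω * Y₂ ω |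
          MeasurableSpace.comap (fun ω => (N ω, R₁ ω, R₂ ω)) inferInstance] =ᵐ[μ]
        fun ω =>
          (μ[Y₁ | MeasurableSpace.comap (fun ω' => (N ω', R₁ ω', R₂ ω')) inferInstance]) ω *
          (μ[Y₂ | MeasurableSpace.comap (fun ω' => (N ω', R₁ ω', R₂ ω')) inferInstance]) ω)
    (hIndep : IndepFun R₂ (fun ω => (R₁ ω, N ω)) μ)
    (hR₂mean : ∫ ω, R₂ ω ∂μ = 1)
    (hR₂var : ∫ ω, (R₂ ω - 1) ^ 2 ∂μ = b₂)
    (hY₁int : Integrable Y₁ μ) (hY₂int : Integrable Y₂ μ)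
    (hprodint : Integrable (fun ω => Y₁ ω * Y₂ ω) μ)
    (hM₁ : Integrable (fun ω => Real.exp (l₁ * (Real.exp β₀ - 1) * R₁ ω)) μ)
    (hM₂ : Integrable (fun ω => Real.exp (l₁ * (Real.exp (2 * β₀) - 1) * R₁ ω)) μ) :
    (∫ ω, Y₁ ω * Y₂ ω ∂μ) - (∫ ω, Y₁ ω ∂μ) * (∫ ω, Y₂ ω ∂μ) =
      l₂ ^ 2 *
        ((1 + b₂) * (∫ ω, Real.exp (l₁ * (Real.exp (2 * β₀) - 1) * R₁ ω) ∂μ) -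
          (∫ ω, Real.exp (l₁ * (Real.exp β₀ - 1) * R₁ ω) ∂μ) ^ 2) := by
  classical
  -- measurability of the random variables
  have hf' : Measurable fun ω => (N ω, R₁ ω, R₂ ω) := by
    rw [measurable_iff_comap_le]
    by_contra h
    rw [condExp_of_not_le h] at hY₁
    have hz : R₂ =ᵐ[μ] 0 := by
      filter_upwards [hY₁] with ω hω
      simp only [Pi.zero_apply] at hω ⊢
      have h1 : l₂ * R₂ ω * Real.exp (β₀ * N ω) = 0 := hω.symm
      rcases mul_eq_zero.mp h1 with h | h
      · rcases mul_eq_zero.mp h with h' | h'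
        · exact absurd h' hl₂.ne'
        · exact h'
      · exact absurd h (Real.exp_pos _).ne'
    have : ∫ ω, R₂ ω ∂μ = 0 := by
      rw [integral_congr_ae hz]; simp
    rw [hR₂mean] at this
    norm_num at this
  have hNmeas : Measurable N := measurable_fst.comp hf'
  have hR₁meas : Measurable R₁ := measurable_fst.comp (measurable_snd.comp hf')
  have hR₂meas : Measurable R₂ := measurable_snd.comp (measurable_snd.comp hf')
  have hm : MeasurableSpace.comap (fun ω => (R₁ ω, R₂ ω)) inferInstance ≤ ‹MeasurableSpace Ω› :=
    (hR₁meas.prodMk hR₂meas).comap_le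
  have hm' : MeasurableSpace.comap (fun ω => (N ω, R₁ ω, R₂ ω)) inferInstance ≤
      ‹MeasurableSpace Ω› := hf'.comap_le
  -- R₁ is a.e. nonnegative
  have hR₁pos : ∀ᵐ ω ∂μ, 0 ≤ l₁ * R₁ ω := by
    have h0 : (0:Ω → ℝ) ≤ᵐ[μ] μ[(fun ω => if N ω = 1 then (1:ℝ) else 0) |
        MeasurableSpace.comap (fun ω => (R₁ ω, R₂ ω)) inferInstance] :=
      condExp_nonneg (ae_of_all _ fun ω => by
        simp only [Pi.zero_apply]
        split <;> norm_num)
    filter_upwards [h0, hN 1] with ω h1 h2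
    rw [h2] at h1
    simp only [Pi.zero_apply, pow_one, Nat.factorial_one, Nat.cast_one, div_one] at h1
    by_contra hx
    push_neg at hx
    nlinarith [Real.exp_pos (-(l₁ * R₁ ω)),
      mul_pos (Real.exp_pos (-(l₁ * R₁ ω))) (neg_pos.mpr hx)]
  -- the Poisson pmf identity in integral form
  have hPkint : ∀ k : ℕ,
      Integrable (fun ω => Real.exp (-(l₁ * R₁ ω)) * (l₁ * R₁ ω) ^ k / (Nat.factorial k)) μ :=
    fun k => integrable_condExp.congr (hN k)
  have hPk : ∀ k : ℕ, ∫ ω, (if N ω = k then (1:ℝ) else 0) ∂μ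
      = ∫ ω, Real.exp (-(l₁ * R₁ ω)) * (l₁ * R₁ ω) ^ k / (Nat.factorial k) ∂μ := by
    intro k
    rw [← integral_condExp hm]
    exact integral_congr_ae (hN k)
  obtain ⟨hintE1, hE1⟩ := exp_poisson_integral μ N R₁ l₁ β₀ hNmeas hR₁meas hR₁pos hPk hPkint hM₁
  obtain ⟨hintE2, hE2⟩ :=
    exp_poisson_integral μ N R₁ l₁ (2 * β₀) hNmeas hR₁meas hR₁pos hPk hPkint hM₂
  have hexpN1meas : Measurable fun ω => Real.exp (β₀ * N ω) :=
    Real.measurable_exp.comp (measurable_const.mul (measurable_from_top.comp hNmeas))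
  have hexpN2meas : Measurable fun ω => Real.exp (2 * β₀ * N ω) :=
    Real.measurable_exp.comp (measurable_const.mul (measurable_from_top.comp hNmeas))
  -- integrability of R₂
  have hR₂int : Integrable R₂ μ := by
    by_contra h
    rw [integral_undef h] at hR₂mean
    norm_num at hR₂mean
  -- first moments
  have hindep1 : IndepFun R₂ (fun ω => Real.exp (β₀ * N ω)) μ := by
    have : Measurable fun p : ℝ × ℕ => Real.exp (β₀ * p.2) :=
      Real.measurable_exp.comp (measurable_const.mul (measurable_from_top.comp measurable_snd))
    exact hIndep.comp measurable_id this
  have hmul1 : ∫ ω, R₂ ω * Real.exp (β₀ * N ω) ∂μ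
      = (∫ ω, R₂ ω ∂μ) * ∫ ω, Real.exp (β₀ * N ω) ∂μ := by
    have := hindep1.integral_fun_mul_eq_mul_integral hR₂meas.aestronglyMeasurable hexpN1meas.aestronglyMeasurable
    simpa [Pi.mul_apply] using this
  have hEY : ∀ Y : Ω → ℝ, Integrable Y μ →
      (μ[Y | MeasurableSpace.comap (fun ω => (N ω, R₁ ω, R₂ ω)) inferInstance] =ᵐ[μ]
        fun ω => l₂ * R₂ ω * Real.exp (β₀ * N ω)) →
      ∫ ω, Y ω ∂μ = l₂ * ∫ ω, Real.exp (l₁ * (Real.exp β₀ - 1) * R₁ ω) ∂μ := by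
    intro Y hYint hY
    calc ∫ ω, Y ω ∂μ
        = ∫ ω, (μ[Y | MeasurableSpace.comap (fun ω => (N ω, R₁ ω, R₂ ω)) inferInstance]) ω ∂μ :=
          (integral_condExp hm').symm
      _ = ∫ ω, l₂ * (R₂ ω * Real.exp (β₀ * N ω)) ∂μ := by
          refine integral_congr_ae (hY.trans (ae_of_all _ fun ω => ?_))
          ring
      _ = l₂ * ∫ ω, R₂ ω * Real.exp (β₀ * N ω) ∂μ := integral_const_mul _ _
      _ = l₂ * ∫ ω, Real.exp (l₁ * (Real.exp β₀ - 1) * R₁ ω) ∂μ := by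
          rw [hmul1, hR₂mean, one_mul, hE1]
  have hEY₁ := hEY Y₁ hY₁int hY₁
  have hEY₂ := hEY Y₂ hY₂int hY₂
  -- second moment part
  have hprodce : μ[(fun ω => Y₁ ω * Y₂ ω) |
      MeasurableSpace.comap (fun ω => (N ω, R₁ ω, R₂ ω)) inferInstance] =ᵐ[μ]
      fun ω => l₂ ^ 2 * (R₂ ω ^ 2 * Real.exp (2 * β₀ * N ω)) := by
    filter_upwards [hCondIndep, hY₁, hY₂] with ω h1 h2 h3
    rw [h1, h2, h3]
    rw [show (2 : ℝ) * β₀ * N ω = β₀ * N ω + β₀ * N ω by ring, Real.exp_add]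
    ring
  have hgint : Integrable (fun ω => R₂ ω ^ 2 * Real.exp (2 * β₀ * N ω)) μ := by
    have h1 : Integrable (fun ω => l₂ ^ 2 * (R₂ ω ^ 2 * Real.exp (2 * β₀ * N ω))) μ :=
      integrable_condExp.congr hprodce
    have h2 := h1.const_mul (l₂ ^ 2)⁻¹
    have hne : (l₂ : ℝ) ^ 2 ≠ 0 := by positivity
    refine h2.congr (ae_of_all _ fun ω => ?_)
    field_simp
  have hindep2 : IndepFun (fun ω => R₂ ω ^ 2) (fun ω => Real.exp (2 * β₀ * N ω)) μ := by
    have hm1 : Measurable fun x : ℝ => x ^ 2 := measurable_id.pow_const 2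
    have hm2 : Measurable fun p : ℝ × ℕ => Real.exp (2 * β₀ * p.2) :=
      Real.measurable_exp.comp (measurable_const.mul (measurable_from_top.comp measurable_snd))
    exact hIndep.comp hm1 hm2
  have hR₂sqint : Integrable (fun ω => R₂ ω ^ 2) μ := by
    refine hindep2.integrable_left_of_integrable_op (· * ·) 1 one_ne_zero
      (fun x y => by simp [enorm_mul]) ?_
      (hR₂meas.pow_const 2).aestronglyMeasurable hexpN2meas.aestronglyMeasurable ?_
    · exact hgint.congr (ae_of_all _ fun ω => rfl)
    · intro h
      obtain ⟨ω, hω⟩ := h.exists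
      exact absurd hω (Real.exp_pos _).ne'
  have hR₂sq : ∫ ω, R₂ ω ^ 2 ∂μ = 1 + b₂ := by
    have hexpand : ∀ ω, (R₂ ω - 1) ^ 2 = R₂ ω ^ 2 - 2 * R₂ ω + 1 := fun ω => by ring
    have h1 : ∫ ω, (R₂ ω - 1) ^ 2 ∂μ
        = ∫ ω, R₂ ω ^ 2 ∂μ - 2 * ∫ ω, R₂ ω ∂μ + 1 := by
      simp_rw [hexpand]
      have h2R : Integrable (fun ω => 2 * R₂ ω) μ := hR₂int.const_mul 2
      have hsub : Integrable (fun ω => R₂ ω ^ 2 - 2 * R₂ ω) μ := hR₂sqint.sub h2R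
      rw [integral_add hsub (integrable_const 1), integral_sub hR₂sqint h2R,
        integral_const_mul, integral_const]
      simp
    rw [hR₂var, hR₂mean] at h1
    linarith
  have hmul2 : ∫ ω, R₂ ω ^ 2 * Real.exp (2 * β₀ * N ω) ∂μ
      = (∫ ω, R₂ ω ^ 2 ∂μ) * ∫ ω, Real.exp (2 * β₀ * N ω) ∂μ := by
    have := hindep2.integral_fun_mul_eq_mul_integral (hR₂meas.pow_const 2).aestronglyMeasurable
      hexpN2meas.aestronglyMeasurable
    simpa [Pi.mul_apply] using this
  have hEprod : ∫ ω, Y₁ ω * Y₂ ω ∂μ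
      = l₂ ^ 2 * ((1 + b₂) * ∫ ω, Real.exp (l₁ * (Real.exp (2 * β₀) - 1) * R₁ ω) ∂μ) := by
    calc ∫ ω, Y₁ ω * Y₂ ω ∂μ
        = ∫ ω, (μ[(fun ω => Y₁ ω * Y₂ ω) |
            MeasurableSpace.comap (fun ω => (N ω, R₁ ω, R₂ ω)) inferInstance]) ω ∂μ :=
          (integral_condExp hm').symm
      _ = ∫ ω, l₂ ^ 2 * (R₂ ω ^ 2 * Real.exp (2 * β₀ * N ω)) ∂μ := integral_congr_ae hprodce
      _ = l₂ ^ 2 * ∫ ω, R₂ ω ^ 2 * Real.exp (2 * β₀ * N ω) ∂μ := integral_const_mul _ _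
      _ = l₂ ^ 2 * ((1 + b₂) * ∫ ω, Real.exp (l₁ * (Real.exp (2 * β₀) - 1) * R₁ ω) ∂μ) := by
          rw [hmul2, hR₂sq, hE2]
  rw [hEprod, hEY₁, hEY₂]
  ring
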